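/- arXiv:2304.11826 — 3 statements merged into one kernel-verified Lean document; each statement's English description precedes it below -/
import Mathlib

section
/- For any two planted phylogenetic trees T and S and any map σ: L(T) → L(S), there exists an HGT-free σ-reconciliation (T,S,μ,σ). In particular, the map μ₀ defined by μ₀(0_T) = 0_S, μ₀(x) = σ(x) for all leaves x ∈ L(T), and μ₀(x) = the edge 0_S ρ_S of S for all inner vertices x ∈ V⁰(T), yields an HGT-free σ-reconciliation (T,S,μ₀,σ). -/
/-- A planted phylogenetic rooted tree, encoded by a parent function on a
finite vertex set.  The root `0_T` is a fixed point of `parent`; every vertex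
reaches the root by iterating `parent`; the root has exactly one child
(`planted`); and every inner vertex (non-root vertex having a child) has at
least two children (`phylo`). -/
structure PPTree where
  V : Type
  [fintypeV : Fintype V]
  [decEqV : DecidableEq V]
  root : V
  parent : V → V
  parent_root : parent root = root
  reach : ∀ v : V, ∃ n : ℕ, parent^[n] v = root
  planted : ∃! v : V, v ≠ root ∧ parent v = root
  phylo : ∀ v : V, v ≠ root → (∃ u, parent u = v ∧ u ≠ v) →
      ∃ u w, parent u = v ∧ parent w = v ∧ u ≠ w ∧ u ≠ v ∧ w ≠ v

attribute [instance] PPTree.fintypeV PPTree.decEqV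

namespace PPTree

variable (T : PPTree)

/-- `T.le x y` means `x ⪯_T y`, i.e. `y` is an ancestor of `x` (or `x = y`). -/
def le (x y : T.V) : Prop := ∃ n : ℕ, T.parent^[n] x = y

/-- `T.lt x y` means `x ≺_T y`. -/
def lt (x y : T.V) : Prop := T.le x y ∧ x ≠ y

/-- Leaves are the `⪯_T`-minimal vertices, i.e. vertices without children. -/
def isLeaf (v : T.V) : Prop := ∀ u, T.parent u = v → u = v

/-- Inner vertices: neither leaves nor the planted root. -/
def inner (v : T.V) : Prop := v ≠ T.root ∧ ¬ T.isLeaf v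

/-- The last common ancestor of two vertices: the `⪯_T`-minimal common
ancestor. -/
noncomputable def lca (x y : T.V) : T.V :=
  @Classical.epsilon _ ⟨T.root⟩
    fun v => T.le x v ∧ T.le y v ∧ ∀ w, T.le x w → T.le y w → T.le v w

/-- The last common ancestor of a set of vertices. -/
noncomputable def lcaSet (A : Set T.V) : T.V :=
  @Classical.epsilon _ ⟨T.root⟩
    fun v => (∀ a ∈ A, T.le a v) ∧ ∀ w, (∀ a ∈ A, T.le a w) → T.le v w

/-- `ρ_T`, the unique child of the planted root. -/
noncomputable def rho : T.V := T.planted.choose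

theorem rho_ne_root : T.rho ≠ T.root := T.planted.choose_spec.1.1

/-- Edges of `T`, identified with their child endpoint: the vertex `v ≠ 0_T`
represents the edge `(parent v, v)`. -/
abbrev Edge := {v : T.V // v ≠ T.root}

/-- The union `V(T) ∪ E(T)`. -/
abbrev VE := T.V ⊕ T.Edge

/-- The ancestor order `⪯_T` extended to `V(T) ∪ E(T)`: for an edge `e = uv`
(`u` the parent of `v`), `x ⪯ e` iff `x ⪯ v`, `e ⪯ x` iff `u ⪯ x`, and
`e ⪯ f` iff the child endpoints are comparable accordingly. -/
def leVE : T.VE → T.VE → Prop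
  | Sum.inl x, Sum.inl y => T.le x y
  | Sum.inl x, Sum.inr e => T.le x e.1
  | Sum.inr e, Sum.inl y => T.le (T.parent e.1) y
  | Sum.inr e, Sum.inr f => T.le e.1 f.1

def ltVE (a b : T.VE) : Prop := T.leVE a b ∧ a ≠ b

/-- Two elements of `V(T) ∪ E(T)` are comparable. -/
def cmpVE (a b : T.VE) : Prop := T.leVE a b ∨ T.leVE b a

/-- Membership in `L(T)` for elements of `V(T) ∪ E(T)`. -/
def isLeafVE : T.VE → Prop
  | Sum.inl v => T.isLeaf v
  | Sum.inr _ => False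

/-- Map an element of `V(T) ∪ E(T)` to a vertex (an edge `uv` is sent to its
child endpoint `v`). -/
def toVertex : T.VE → T.V
  | Sum.inl v => v
  | Sum.inr e => e.1

end PPTree

/-- Axioms (R0)–(R3) of a reconciliation map `μ : V(T) → V(S) ∪ E(S)`. -/
structure IsRecon (T S : PPTree) (μ : T.V → S.VE) : Prop where
  R0 : ∀ x, μ x = Sum.inl S.root ↔ x = T.root
  R1 : ∀ x, S.isLeafVE (μ x) ↔ T.isLeaf x
  R2 : ∀ x y, T.lt y x → (∃ u, μ x = Sum.inl u) → (∃ v, μ y = Sum.inl v) → μ x ≠ μ y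
  R3 : ∀ x y, T.lt y x → ¬ S.ltVE (μ x) (μ y)

/-- A reconciliation is HGT-free if the images of the endpoints of every edge
of `T` are `⪯_S`-comparable. -/
def IsHGTFree (T S : PPTree) (μ : T.V → S.VE) : Prop :=
  ∀ v : T.V, v ≠ T.root → S.cmpVE (μ (T.parent v)) (μ v)

/-- `(T,S,μ,σ)` is a σ-reconciliation when `μ` restricted to `L(T)` equals
`σ`. -/
def SigmaCompat (T S : PPTree) (μ : T.V → S.VE) (σ : T.V → S.V) : Prop :=
  ∀ x, T.isLeaf x → μ x = Sum.inl (σ x)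

/-- A time map for `T`. -/
def IsTimeMap (T : PPTree) (τ : T.V → ℝ) : Prop :=
  ∀ x y, T.lt x y → τ x < τ y

/-- Axioms (S0)–(S3) of a relaxed scenario `(T,S,μ,τ_T,τ_S)`. -/
structure IsRelaxedScenario (T S : PPTree) (μ : T.V → S.VE)
    (τT : T.V → ℝ) (τS : S.V → ℝ) : Prop where
  timeT : IsTimeMap T τT
  timeS : IsTimeMap S τS
  S0 : ∀ x, μ x = Sum.inl S.root ↔ x = T.root
  S1 : ∀ x, S.isLeafVE (μ x) ↔ T.isLeaf x
  S2 : ∀ x v, μ x = Sum.inl v → τS v = τT x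
  S3 : ∀ x (e : S.Edge), μ x = Sum.inr e → τS e.1 < τT x ∧ τT x < τS (S.parent e.1)

open Classical in
/-- The map `μ₀`: the planted root of `T` is sent to the planted root of `S`,
leaves are sent to leaves according to `σ`, and all inner vertices are sent to
the edge `0_S ρ_S` of `S`. -/
noncomputable def mu0 (T S : PPTree) (σ : T.V → S.V) : T.V → S.VE := fun x =>
  if x = T.root then Sum.inl S.root
  else if T.isLeaf x then Sum.inl (σ x)
  else Sum.inr ⟨S.rho, S.rho_ne_root⟩

namespace PPTree

theorem root_not_leaf (T : PPTree) : ¬ T.isLeaf T.root := fun h =>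
  T.planted.choose_spec.1.1 (h _ T.planted.choose_spec.1.2)

theorem le_root (T : PPTree) (v : T.V) : T.le v T.root := T.reach v

theorem iter_root (T : PPTree) (n : ℕ) : T.parent^[n] T.root = T.root := by
  induction n with
  | zero => rfl
  | succ n ih => rw [Function.iterate_succ_apply', ih, T.parent_root]

theorem eq_root_of_root_le (T : PPTree) (v : T.V) (h : T.le T.root v) : v = T.root := by
  obtain ⟨n, hn⟩ := h; rw [T.iter_root] at hn; exact hn.symm

theorem eq_of_le_leaf (T : PPTree) (x : T.V) (hx : T.isLeaf x) :
    ∀ y, T.le y x → y = x := by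
  intro y ⟨n, hn⟩
  induction n generalizing y with
  | zero => exact hn
  | succ n ih =>
    rw [Function.iterate_succ_apply'] at hn
    exact ih y (hx _ hn)

theorem eq_rho (T : PPTree) (v : T.V) (hv : v ≠ T.root) (hp : T.parent v = T.root) :
    v = T.rho := (T.planted.choose_spec.2 v ⟨hv, hp⟩)

theorem le_rho_of_ne_root (T : PPTree) (v : T.V) (hv : v ≠ T.root) : T.le v T.rho := by
  obtain ⟨n, hn⟩ := T.reach v
  induction n generalizing v with
  | zero => exact absurd hn hv
  | succ n ih =>
    by_cases hp : T.parent v = T.root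
    · exact ⟨0, T.eq_rho v hv hp⟩
    · rw [Function.iterate_succ_apply] at hn
      obtain ⟨m, hm⟩ := ih (T.parent v) hp hn
      exact ⟨m + 1, by rw [Function.iterate_succ_apply]; exact hm⟩

theorem eq_root_of_parent_eq (T : PPTree) (v : T.V) (h : T.parent v = v) : v = T.root := by
  obtain ⟨n, hn⟩ := T.reach v
  have key : ∀ m, T.parent^[m] v = v := by
    intro m
    induction m with
    | zero => rfl
    | succ m ih => rw [Function.iterate_succ_apply', ih, h]
  rw [key] at hn; exact hn

end PPTree

theorem mu0_works (T S : PPTree) (σ : T.V → S.V) (hσ : ∀ x, T.isLeaf x → S.isLeaf (σ x)) :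
    IsRecon T S (mu0 T S σ) ∧ IsHGTFree T S (mu0 T S σ) ∧
      SigmaCompat T S (mu0 T S σ) σ := by
  have σne : ∀ x, T.isLeaf x → σ x ≠ S.root := fun x hx h =>
    S.root_not_leaf (h ▸ hσ x hx)
  have hleafne : ∀ x : T.V, T.isLeaf x → x ≠ T.root := fun x hx h =>
    T.root_not_leaf (h ▸ hx)
  have hval : ∀ x : T.V, x ≠ T.root → ¬ T.isLeaf x →
      mu0 T S σ x = Sum.inr ⟨S.rho, S.rho_ne_root⟩ := by
    intro x h1 h2; simp [mu0, h1, h2]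
  have hvleaf : ∀ x : T.V, T.isLeaf x → mu0 T S σ x = Sum.inl (σ x) := by
    intro x hx; simp [mu0, hleafne x hx, hx]
  have hvroot : mu0 T S σ T.root = Sum.inl S.root := by simp [mu0]
  refine ⟨⟨?_, ?_, ?_, ?_⟩, ?_, ?_⟩
  · -- R0
    intro x
    constructor
    · intro h
      by_contra hx
      by_cases hl : T.isLeaf x
      · rw [hvleaf x hl] at h
        exact σne x hl (Sum.inl.inj h)
      · rw [hval x hx hl] at h; cases h
    · intro h; rw [h, hvroot]
  · -- R1
    intro x
    by_cases hx : x = T.root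
    · subst hx; rw [hvroot]
      simp only [PPTree.isLeafVE]
      exact ⟨fun h => absurd h S.root_not_leaf, fun h => absurd h T.root_not_leaf⟩
    · by_cases hl : T.isLeaf x
      · rw [hvleaf x hl]; simpa [PPTree.isLeafVE] using ⟨fun _ => hl, fun _ => hσ x hl⟩
      · rw [hval x hx hl]; simp [PPTree.isLeafVE, hl]
  · -- R2
    intro x y hlt hx hy
    by_cases hxr : x = T.root
    · subst hxr
      by_cases hyl : T.isLeaf y
      · rw [hvroot, hvleaf y hyl]
        intro h; exact σne y hyl (Sum.inl.inj h).symm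
      · intro _; obtain ⟨v, hv⟩ := hy
        rw [hval y (fun h => hlt.2 (h ▸ rfl)) hyl] at hv
        cases hv
    · by_cases hxl : T.isLeaf x
      · exact absurd (T.eq_of_le_leaf x hxl y hlt.1) hlt.2
      · intro _; obtain ⟨v, hv⟩ := hx
        rw [hval x hxr hxl] at hv
        cases hv
  · -- R3
    intro x y hlt
    by_cases hxr : x = T.root
    · subst hxr
      rw [hvroot]
      by_cases hyr : y = T.root
      · exact absurd (hyr ▸ rfl) hlt.2
      by_cases hyl : T.isLeaf y
      · rw [hvleaf y hyl]
        rintro ⟨hle, hne⟩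
        exact σne y hyl (S.eq_root_of_root_le _ hle)
      · rw [hval y hyr hyl]
        rintro ⟨hle, -⟩
        exact S.rho_ne_root (S.eq_root_of_root_le _ hle)
    · by_cases hxl : T.isLeaf x
      · exact absurd (T.eq_of_le_leaf x hxl y hlt.1) hlt.2
      · rw [hval x hxr hxl]
        have hyr : y ≠ T.root := by
          intro h; subst h
          exact hxr (T.eq_root_of_root_le x hlt.1)
        by_cases hyl : T.isLeaf y
        · rw [hvleaf y hyl]
          rintro ⟨hle, -⟩
          simp only [PPTree.leVE] at hle
          rw [show S.parent S.rho = S.root from S.planted.choose_spec.1.2] at hle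
          exact σne y hyl (S.eq_root_of_root_le _ hle)
        · rw [hval y hyr hyl]
          rintro ⟨-, hne⟩; exact hne rfl
  · -- HGT-free
    intro v hv
    have hvp : T.parent v ≠ v := fun h => hv (T.eq_root_of_parent_eq v h)
    have hpnl : ¬ T.isLeaf (T.parent v) := fun h => hvp (h v rfl).symm
    by_cases hpr : T.parent v = T.root
    · rw [hpr, hvroot]
      by_cases hvl : T.isLeaf v
      · rw [hvleaf v hvl]
        exact Or.inr (S.le_root _)
      · rw [hval v hv hvl]
        exact Or.inr (S.le_root _)
    · rw [hval _ hpr hpnl]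
      by_cases hvl : T.isLeaf v
      · rw [hvleaf v hvl]
        exact Or.inr (S.le_rho_of_ne_root _ (σne v hvl))
      · rw [hval v hv hvl]
        exact Or.inl ⟨0, rfl⟩
  · -- SigmaCompat
    intro x hx; exact hvleaf x hx

/-- For any two planted phylogenetic trees `T` and `S` and any
map `σ : L(T) → L(S)` there exists an HGT-free σ-reconciliation
`(T,S,μ,σ)`; in particular, `μ₀` yields an HGT-free σ-reconciliation. -/
theorem exists_HGTfree_sigma_reconciliation
    (T S : PPTree) (σ : T.V → S.V) (hσ : ∀ x, T.isLeaf x → S.isLeaf (σ x)) :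
    (∃ μ : T.V → S.VE, IsRecon T S μ ∧ IsHGTFree T S μ ∧ SigmaCompat T S μ σ) ∧
    (IsRecon T S (mu0 T S σ) ∧ IsHGTFree T S (mu0 T S σ) ∧
      SigmaCompat T S (mu0 T S σ) σ) :=
  ⟨⟨mu0 T S σ, (mu0_works T S σ hσ).1, (mu0_works T S σ hσ).2⟩, mu0_works T S σ hσ⟩
end

section
/- Every HGT-free σ-reconciliation (T,S,μ,σ) satisfies lca_S(σ(L(T(x)))) ⪯_S μ(x) for every vertex x ∈ V(T), where T(x) denotes the subtree of T rooted at x and L(T(x)) its leaf set. -/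
section Aux

namespace PPTree

variable (T : PPTree)

lemma le_refl' (x : T.V) : T.le x x := ⟨0, rfl⟩

lemma le_trans' {x y z : T.V} (h1 : T.le x y) (h2 : T.le y z) : T.le x z := by
  obtain ⟨n, hn⟩ := h1; obtain ⟨m, hm⟩ := h2
  exact ⟨m + n, by rw [Function.iterate_add_apply, hn, hm]⟩

lemma iterate_parent_root (n : ℕ) : T.parent^[n] T.root = T.root :=
  Function.iterate_fixed T.parent_root n

lemma le_antisymm' {x y : T.V} (h1 : T.le x y) (h2 : T.le y x) : x = y := by
  obtain ⟨n, hn⟩ := h1; obtain ⟨m, hm⟩ := h2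
  have hper : T.parent^[m + n] x = x := by rw [Function.iterate_add_apply, hn, hm]
  rcases Nat.eq_zero_or_pos (m + n) with h | h
  · have hn0 : n = 0 := by omega
    subst hn0; simpa using hn
  · -- x is periodic with positive period, hence x = root
    obtain ⟨k, hk⟩ := T.reach x
    have hper' : ∀ j, T.parent^[(m + n) * j] x = x := by
      intro j
      induction j with
      | zero => rfl
      | succ j ih =>
        rw [Nat.mul_succ, Function.iterate_add_apply, hper, ih]
    have hx : x = T.root := by
      have h1 : T.parent^[(m + n) * k] x = x := hper' k
      have h2 : T.parent^[(m + n) * k] x = T.root := by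
        have : (m + n) * k = ((m + n) * k - k) + k := by
          have : k ≤ (m + n) * k := Nat.le_mul_of_pos_left k h
          omega
        rw [this, Function.iterate_add_apply, hk, iterate_parent_root]
      rw [← h1, h2]
    rw [hx] at hn ⊢
    rw [iterate_parent_root] at hn
    exact hn

lemma le_step_parent {x v : T.V} (h : T.le x v) : T.le x (T.parent v) := by
  obtain ⟨n, hn⟩ := h
  exact ⟨n + 1, by rw [Function.iterate_succ_apply', hn]⟩

lemma le_parent_mono {u v : T.V} (h : T.le u v) : T.le (T.parent u) (T.parent v) := by
  obtain ⟨n, hn⟩ := h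
  exact ⟨n, by rw [← Function.iterate_succ_apply, Function.iterate_succ_apply', hn]⟩

lemma leVE_refl' (a : T.VE) : T.leVE a a := by
  cases a with
  | inl v => exact T.le_refl' v
  | inr e => exact T.le_refl' e.1

lemma leVE_trans' {a b c : T.VE} (h1 : T.leVE a b) (h2 : T.leVE b c) : T.leVE a c := by
  cases a with
  | inl x =>
    cases b with
    | inl y =>
      cases c with
      | inl z => exact T.le_trans' h1 h2
      | inr f => exact T.le_trans' h1 h2
    | inr e =>
      cases c with
      | inl z => exact T.le_trans' (T.le_step_parent h1) h2
      | inr f => exact T.le_trans' h1 h2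
  | inr e =>
    cases b with
    | inl y =>
      cases c with
      | inl z => exact T.le_trans' h1 h2
      | inr f => exact T.le_trans' (T.le_trans' ⟨1, rfl⟩ h1) h2
    | inr f =>
      cases c with
      | inl z => exact T.le_trans' (T.le_parent_mono h1) h2
      | inr g => exact T.le_trans' h1 h2

lemma exists_leaf_le (x : T.V) : ∃ l, T.isLeaf l ∧ T.le l x := by
  classical
  suffices h : ∀ n (x : T.V), ({v | T.le v x}.toFinset).card ≤ n →
      ∃ l, T.isLeaf l ∧ T.le l x from
    h _ x le_rfl
  intro n
  induction n with
  | zero =>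
    intro x h
    exfalso
    have hx : x ∈ {v | T.le v x}.toFinset := by
      simp only [Set.mem_toFinset, Set.mem_setOf_eq]
      exact T.le_refl' x
    have := Finset.card_pos.mpr ⟨x, hx⟩
    omega
  | succ n ih =>
    intro x h
    by_cases hx : T.isLeaf x
    · exact ⟨x, hx, T.le_refl' x⟩
    · have : ∃ u, T.parent u = x ∧ u ≠ x := by
        by_contra hcon
        push_neg at hcon
        exact hx hcon
      obtain ⟨u, hu, hne⟩ := this
      have hux : T.le u x := ⟨1, hu⟩
      have hxin : x ∈ {v | T.le v x}.toFinset := by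
        simp only [Set.mem_toFinset, Set.mem_setOf_eq]; exact T.le_refl' x
      have hsub : {v | T.le v u}.toFinset ⊆ {v | T.le v x}.toFinset \ {x} := by
        intro v hv
        simp only [Set.mem_toFinset, Set.mem_setOf_eq] at hv
        simp only [Finset.mem_sdiff, Set.mem_toFinset, Set.mem_setOf_eq,
          Finset.mem_singleton]
        refine ⟨T.le_trans' hv hux, ?_⟩
        rintro rfl
        exact hne (T.le_antisymm' hux hv)
      have hcard : ({v | T.le v u}.toFinset).card ≤ n := by
        have h1 := Finset.card_le_card hsub
        have h2 : ({v | T.le v x}.toFinset \ {x}).card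
            = ({v | T.le v x}.toFinset).card - 1 := by
          rw [Finset.card_sdiff_of_subset (by simpa using hxin)]
          simp
        omega
      obtain ⟨l, hl, hlu⟩ := ih u hcard
      exact ⟨l, hl, T.le_trans' hlu hux⟩

lemma lcaSet_spec' (A : Set T.V) (hA : A.Nonempty) :
    (∀ a ∈ A, T.le a (T.lcaSet A)) ∧
      ∀ w, (∀ a ∈ A, T.le a w) → T.le (T.lcaSet A) w := by
  classical
  obtain ⟨a, ha⟩ := hA
  have hex : ∃ v, (∀ b ∈ A, T.le b v) ∧ ∀ w, (∀ b ∈ A, T.le b w) → T.le v w := by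
    have hP : ∃ n, ∀ b ∈ A, T.le b (T.parent^[n] a) := by
      obtain ⟨k, hk⟩ := T.reach a
      exact ⟨k, by rw [hk]; exact fun b _ => T.reach b⟩
    refine ⟨T.parent^[Nat.find hP] a, Nat.find_spec hP, ?_⟩
    intro w hw
    obtain ⟨m, hm⟩ := hw a ha
    have hle : Nat.find hP ≤ m := Nat.find_min' hP (by rw [hm]; exact hw)
    exact ⟨m - Nat.find hP, by
      rw [← Function.iterate_add_apply, Nat.sub_add_cancel hle, hm]⟩
  exact Classical.epsilon_spec hex

end PPTree

lemma recon_step {T S : PPTree} {μ : T.V → S.VE}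
    (hrec : IsRecon T S μ) (hfree : IsHGTFree T S μ)
    (v : T.V) (hv : v ≠ T.root) : S.leVE (μ v) (μ (T.parent v)) := by
  have hne : v ≠ T.parent v := by
    intro h
    apply hv
    obtain ⟨k, hk⟩ := T.reach v
    rw [← hk, Function.iterate_fixed h.symm k]
  have hlt : T.lt v (T.parent v) := ⟨⟨1, rfl⟩, hne⟩
  rcases hfree v hv with h | h
  · have h3 := hrec.R3 (T.parent v) v hlt
    have heq : μ (T.parent v) = μ v := by
      by_contra hcon
      exact h3 ⟨h, hcon⟩
    rw [heq]
    exact S.leVE_refl' _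
  · exact h

end Aux

/-- Every HGT-free σ-reconciliation `(T,S,μ,σ)` satisfies
`lca_S(σ(L(T(x)))) ⪯_S μ(x)` for every vertex `x ∈ V(T)`, where `L(T(x))` is
the set of leaves of the subtree of `T` rooted at `x`. -/
theorem lca_of_subtree_species_below_mu
    (T S : PPTree) (μ : T.V → S.VE) (σ : T.V → S.V)
    (hrec : IsRecon T S μ) (hfree : IsHGTFree T S μ) (hσ : SigmaCompat T S μ σ)
    (x : T.V) :
    S.leVE (Sum.inl (S.lcaSet (σ '' {l : T.V | T.isLeaf l ∧ T.le l x}))) (μ x) := by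
  classical
  set A := σ '' {l : T.V | T.isLeaf l ∧ T.le l x} with hA
  have hAne : A.Nonempty := by
    obtain ⟨l, hl, hle⟩ := T.exists_leaf_le x
    exact ⟨σ l, ⟨l, ⟨hl, hle⟩, rfl⟩⟩
  obtain ⟨h1, h2⟩ := S.lcaSet_spec' A hAne
  have key : ∀ n (l : T.V), S.leVE (μ l) (μ (T.parent^[n] l)) := by
    intro n l
    induction n with
    | zero => exact S.leVE_refl' _
    | succ n ih =>
      rw [Function.iterate_succ_apply']
      by_cases hv : T.parent^[n] l = T.root
      · rw [hv, T.parent_root]; rw [hv] at ih; exact ih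
      · exact S.leVE_trans' ih (recon_step hrec hfree _ hv)
  have hmem : ∀ a ∈ A, S.leVE (Sum.inl a) (μ x) := by
    rintro a ⟨l, ⟨hl, ⟨n, hn⟩⟩, rfl⟩
    have := key n l
    rw [hn, hσ l hl] at this
    exact this
  cases hμ : μ x with
  | inl v =>
    show S.le (S.lcaSet A) v
    refine h2 v fun a ha => ?_
    have := hmem a ha
    rw [hμ] at this
    exact this
  | inr e =>
    show S.le (S.lcaSet A) e.1
    refine h2 e.1 fun a ha => ?_
    have := hmem a ha
    rw [hμ] at this
    exact this
end

section
/- For every relaxed scenario 𝒮 = (T,S,μ,τ_T,τ_S), the triple (T,S,μ) is a reconciliation, i.e., μ satisfies axioms (R0)–(R3). -/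
/-- For every relaxed scenario `(T,S,μ,τ_T,τ_S)` the triple
`(T,S,μ)` is a reconciliation, i.e. `μ` satisfies axioms (R0)–(R3). -/
theorem relaxedScenario_isRecon
    (T S : PPTree) (μ : T.V → S.VE) (τT : T.V → ℝ) (τS : S.V → ℝ)
    (h : IsRelaxedScenario T S μ τT τS) :
    IsRecon T S μ := by
  have tauLe : ∀ {u v : S.V}, S.le u v → τS u ≤ τS v := by
    intro u v huv
    by_cases heq : u = v
    · simp [heq]
    · exact le_of_lt (h.timeS u v ⟨huv, heq⟩)
  refine ⟨h.S0, h.S1, ?_, ?_⟩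
  · intro x y hlt hx hy hne
    obtain ⟨u, hu⟩ := hx
    obtain ⟨v, hv⟩ := hy
    rw [hu, hv] at hne
    have huv : u = v := by injection hne
    have htx := h.S2 x u hu
    have hty := h.S2 y v hv
    have hlt' := h.timeT y x hlt
    rw [huv] at htx
    linarith
  · intro x y hlt hcon
    obtain ⟨hle, hne⟩ := hcon
    have hlt' := h.timeT y x hlt
    cases hmx : μ x with
    | inl u =>
      have htx := h.S2 x u hmx
      cases hmy : μ y with
      | inl v =>
        have hty := h.S2 y v hmy
        rw [hmx, hmy] at hle hne
        have huv : u ≠ v := fun e => hne (by rw [e])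
        have : τS u < τS v := h.timeS u v ⟨hle, huv⟩
        linarith
      | inr f =>
        have hty := (h.S3 y f hmy).1
        rw [hmx, hmy] at hle
        have : τS u ≤ τS f.1 := tauLe hle
        linarith
    | inr e =>
      have htx := (h.S3 x e hmx).2
      cases hmy : μ y with
      | inl v =>
        have hty := h.S2 y v hmy
        rw [hmx, hmy] at hle
        have : τS (S.parent e.1) ≤ τS v := tauLe hle
        linarith
      | inr f =>
        have hty := (h.S3 y f hmy).1
        rw [hmx, hmy] at hle hne
        have hef : e.1 ≠ f.1 := by
          intro hh
          exact hne (by rw [Subtype.ext hh])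
        obtain ⟨n, hn⟩ := hle
        cases n with
        | zero => exact hef hn
        | succ m =>
          have hpe : S.le (S.parent e.1) f.1 :=
            ⟨m, by rw [← hn, Function.iterate_succ_apply]⟩
          have : τS (S.parent e.1) ≤ τS f.1 := tauLe hpe
          linarith
end
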